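/- Let f ∈ ℤ[x] have degree d ≥ 2, let n_1 < n_2 < ... < n_{d−k+1} be integers where 1 ≤ k ≤ d−1, and let q be a positive integer and a an integer such that f(n_i) ≡ a (mod q) for all i and gcd(q, n_i − n_j) = 1 for all i < j. Then q divides the integer A = Σ_{i=1}^{d−k+1} f(n_i) / Π_{j≠i}(n_i − n_j). -/

import Mathlib

open Polynomial

open Finset

private lemma coeff_basis {N : ℕ} (x : Fin (N+1) → ℚ) (hx : Function.Injective x) (i : Fin (N+1)) :
    (Lagrange.basis Finset.univ x i).coeff N =
      (∏ j ∈ Finset.univ.erase i, (x i - x j))⁻¹ := by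
  have hinj : Set.InjOn x (Finset.univ : Finset (Fin (N+1))) := hx.injOn
  have hnd : (Lagrange.basis Finset.univ x i).natDegree = N := by
    rw [Lagrange.natDegree_basis hinj (mem_univ i)]; simp
  have hc : (Lagrange.basis Finset.univ x i).coeff N =
      (Lagrange.basis Finset.univ x i).leadingCoeff := by
    rw [Polynomial.leadingCoeff, hnd]
  rw [hc, Lagrange.basis, leadingCoeff_prod]
  rw [← Finset.prod_inv_distrib]
  refine Finset.prod_congr rfl fun j hj => ?_
  have hne : x i ≠ x j := fun h => (mem_erase.mp hj).1 (hx h).symm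
  rw [Lagrange.basisDivisor, leadingCoeff_mul, leadingCoeff_C, leadingCoeff_X_sub_C, mul_one]

private lemma key {N : ℕ} (x : Fin (N+1) → ℚ) (hx : Function.Injective x)
    (p : Polynomial ℚ) (hp : p.degree < (N+1 : ℕ)) :
    p.coeff N = ∑ i, p.eval (x i) / ∏ j ∈ Finset.univ.erase i, (x i - x j) := by
  have hinj : Set.InjOn x (Finset.univ : Finset (Fin (N+1))) := hx.injOn
  have hcard : #(Finset.univ : Finset (Fin (N+1))) = N+1 := by simp
  have hp' := Lagrange.eq_interpolate hinj (by rw [hcard]; exact hp)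
  conv_lhs => rw [hp']
  rw [Lagrange.interpolate_apply, finset_sum_coeff]
  refine Finset.sum_congr rfl fun i _ => ?_
  rw [coeff_C_mul, coeff_basis x hx i, div_eq_mul_inv]


/-- Let `f ∈ ℤ[x]` of degree `d ≥ 2`, `1 ≤ k ≤ d−1`, integers
`n₁ < ⋯ < n_{d−k+1}`, `q > 0`, `a ∈ ℤ` with `f(nᵢ) ≡ a (mod q)` for all `i` and
`gcd(q, nᵢ − nⱼ) = 1` for `i ≠ j`. Then the divided difference
`A = ∑ᵢ f(nᵢ) / ∏_{j≠i}(nᵢ − nⱼ)` is an integer divisible by `q`. -/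
theorem stmt_3 (f : Polynomial ℤ) (d : ℕ) (hd : f.natDegree = d) (hd2 : 2 ≤ d)
    (k : ℕ) (hk1 : 1 ≤ k) (hk2 : k ≤ d - 1)
    (n : Fin (d - k + 1) → ℤ) (hmono : StrictMono n)
    (q : ℤ) (hq : 0 < q) (a : ℤ)
    (hcong : ∀ i, f.eval (n i) ≡ a [ZMOD q])
    (hcop : ∀ i j, i ≠ j → IsCoprime q (n i - n j)) :
    ∃ A : ℤ,
      (A : ℚ) = ∑ i, ((f.eval (n i) : ℤ) : ℚ) /
          ∏ j ∈ Finset.univ.erase i, ((n i : ℚ) - (n j : ℚ)) ∧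
      q ∣ A := by
  have hN1 : 1 ≤ d - k := by omega
  have hninj : Function.Injective n := hmono.injective
  set x : Fin (d - k + 1) → ℚ := fun i => (n i : ℚ) with hxdef
  have hx : Function.Injective x := fun i j h => hninj (Int.cast_injective h)
  set Dq : Fin (d - k + 1) → ℚ := fun i => ∏ j ∈ Finset.univ.erase i, (x i - x j) with hDq
  have hDqne : ∀ i, Dq i ≠ 0 := by
    intro i
    refine Finset.prod_ne_zero_iff.mpr fun j hj => sub_ne_zero_of_ne fun h => ?_
    exact (Finset.mem_erase.mp hj).1 (hx h).symm
  set W : Polynomial ℤ := Lagrange.nodal Finset.univ n with hW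
  have hWmonic : W.Monic := Lagrange.nodal_monic
  set r : Polynomial ℤ := f %ₘ W with hr
  set A : ℤ := r.coeff (d - k) with hA
  set rq : Polynomial ℚ := r.map (Int.castRingHom ℚ) with hrq
  have hWq : W.map (Int.castRingHom ℚ) = Lagrange.nodal Finset.univ x := by
    simp [hW, Lagrange.nodal, Polynomial.map_prod, hxdef]
  have hrqdeg : rq.degree < ((d - k + 1 : ℕ) : WithBot ℕ) := by
    rw [hrq, hr, Polynomial.map_modByMonic _ hWmonic, hWq]
    refine lt_of_lt_of_le (Polynomial.degree_modByMonic_lt _ Lagrange.nodal_monic) ?_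
    rw [Lagrange.degree_nodal]
    simp
  have hrqeval : ∀ i, rq.eval (x i) = ((f.eval (n i) : ℤ) : ℚ) := by
    intro i
    rw [hrq, hr, Polynomial.map_modByMonic _ hWmonic, hWq,
      Polynomial.modByMonic_eq_sub_mul_div _ _,
      Polynomial.eval_sub, Polynomial.eval_mul,
      Lagrange.eval_nodal_at_node (Finset.mem_univ i), zero_mul, sub_zero]
    simpa [hxdef] using Polynomial.eval_intCast_map (Int.castRingHom ℚ) f (n i)
  have hAsum : (A : ℚ) = ∑ i, ((f.eval (n i) : ℤ) : ℚ) / Dq i := by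
    have hc : (A : ℚ) = rq.coeff (d - k) := by
      rw [hrq, Polynomial.coeff_map, hA, eq_intCast]
    rw [hc, key x hx rq hrqdeg]
    exact Finset.sum_congr rfl fun i _ => by rw [hrqeval i]
  refine ⟨A, hAsum, ?_⟩
  -- sum of 1/Dq is zero
  have hone : (0 : ℚ) = ∑ i, 1 / Dq i := by
    have h1 := key x hx 1 (by
      rw [Polynomial.degree_one]
      exact_mod_cast Nat.succ_pos (d - k))
    have h0 : d - k ≠ 0 := by omega
    simpa [Polynomial.coeff_one, h0] using h1
  set m : Fin (d - k + 1) → ℤ := fun i => f.eval (n i) - a with hm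
  have hqm : ∀ i, q ∣ m i := fun i => (hcong i).symm.dvd
  have hAm : (A : ℚ) = ∑ i, (m i : ℚ) / Dq i := by
    rw [hAsum]
    have hterm : ∀ i, ((f.eval (n i) : ℤ) : ℚ) / Dq i
        = (m i : ℚ) / Dq i + (a : ℚ) * (1 / Dq i) := by
      intro i
      rw [hm]
      push_cast
      field_simp
      ring
    simp_rw [hterm]
    rw [Finset.sum_add_distrib, ← Finset.mul_sum, ← hone, mul_zero, add_zero]
  set D : Fin (d - k + 1) → ℤ := fun i => ∏ j ∈ Finset.univ.erase i, (n i - n j) with hD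
  have hDcast : ∀ i, ((D i : ℤ) : ℚ) = Dq i := by
    intro i
    rw [hD, hDq, hxdef]
    push_cast
    rfl
  set P : ℤ := ∏ i, D i with hP
  have hPA : A * P = ∑ i, m i * ∏ j ∈ Finset.univ.erase i, D j := by
    have hcast : ((A * P : ℤ) : ℚ) = ((∑ i, m i * ∏ j ∈ Finset.univ.erase i, D j : ℤ) : ℚ) := by
      rw [hP]
      push_cast
      simp_rw [hDcast]
      rw [hAm, Finset.sum_mul]
      refine Finset.sum_congr rfl fun i _ => ?_
      rw [← Finset.mul_prod_erase Finset.univ Dq (Finset.mem_univ i), ← mul_assoc,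
        div_mul_cancel₀ _ (hDqne i)]
    exact_mod_cast hcast
  have hdvdAP : q ∣ A * P := by
    rw [hPA]
    exact Finset.dvd_sum fun i _ => Dvd.dvd.mul_right (hqm i) _
  have hcopP : IsCoprime q P := by
    rw [hP]
    refine IsCoprime.prod_right fun i _ => ?_
    rw [hD]
    exact IsCoprime.prod_right fun j hj =>
      hcop i j fun h => (Finset.mem_erase.mp hj).1 h.symm
  exact hcopP.dvd_of_dvd_mul_right hdvdAP
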